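/- Fix η0, x, β ∈ ℝ and σ > 0. Let Y_1, Y_2, … be i.i.d. {0,1}-valued random variables with P(Y_j = 1) = Φ(η0). For each m let g_m(η) = (∏_{j=1}^m f(Y_j|η)) σ^{−1} φ((η − βx)/σ). Then the posterior mean (∫_ℝ η g_m(η) dη) / (∫_ℝ g_m(η) dη) converges in probability to η0 as m → ∞. -/

import Mathlib

open MeasureTheory Filter Real ProbabilityTheory

/-- The standard normal density `φ(s) = exp(−s²/2)/√(2π)`. -/
noncomputable def stdPhi (s : ℝ) : ℝ := Real.exp (-s ^ 2 / 2) / Real.sqrt (2 * Real.pi)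

/-- The standard normal CDF `Φ(t) = ∫_{−∞}^t φ(s) ds`. -/
noncomputable def stdPhiCDF (t : ℝ) : ℝ := ∫ s in Set.Iic t, stdPhi s

/-- The probit Bernoulli density `f(y|η) = Φ(η)^y (1−Φ(η))^{1−y}` for `y ∈ {0,1}`. -/
noncomputable def probitDens (y η : ℝ) : ℝ := if y = 1 then stdPhiCDF η else 1 - stdPhiCDF η

/-- The mixed-model likelihood contribution
`L_m(β,σ;y,x) = ∫ (∏_{j<m} f(y_j|η)) σ⁻¹ φ((η−βx)/σ) dη`. -/
noncomputable def Lcontrib (m : ℕ) (β σ : ℝ) (y : ℕ → ℝ) (x : ℝ) : ℝ :=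
  ∫ η : ℝ, (∏ j ∈ Finset.range m, probitDens (y j) η) * (σ⁻¹ * stdPhi ((η - β * x) / σ))

lemma stdPhi_pos (s : ℝ) : 0 < stdPhi s :=
  div_pos (Real.exp_pos _) (Real.sqrt_pos.2 (by positivity))

lemma stdPhi_eq (s : ℝ) : stdPhi s = (Real.sqrt (2 * Real.pi))⁻¹ * Real.exp (-(1/2) * s ^ 2) := by
  rw [stdPhi]; ring_nf

lemma integrable_stdPhi : Integrable stdPhi := by
  have := (integrable_exp_neg_mul_sq (by norm_num : (0:ℝ) < 1/2)).const_mul (Real.sqrt (2 * Real.pi))⁻¹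
  refine this.congr (ae_of_all _ fun s => ?_)
  rw [stdPhi_eq]

lemma integral_stdPhi : ∫ s, stdPhi s = 1 := by
  have h := integral_gaussian (1/2 : ℝ)
  have : ∫ s, stdPhi s = (Real.sqrt (2 * Real.pi))⁻¹ * ∫ s : ℝ, Real.exp (-(1/2) * s ^ 2) := by
    rw [← integral_const_mul]
    exact integral_congr_ae (ae_of_all _ fun s => stdPhi_eq s)
  rw [this, h]
  rw [show Real.pi / (1/2 : ℝ) = 2 * Real.pi by ring]
  rw [inv_mul_cancel₀ (by positivity)]

lemma stdPhiCDF_sub {a b : ℝ} (hab : a ≤ b) :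
    stdPhiCDF b - stdPhiCDF a = ∫ s in Set.Ioc a b, stdPhi s := by
  have h1 : Set.Iic a ∪ Set.Ioc a b = Set.Iic b := Set.Iic_union_Ioc_eq_Iic hab
  have h2 : stdPhiCDF b = stdPhiCDF a + ∫ s in Set.Ioc a b, stdPhi s := by
    rw [stdPhiCDF, ← h1, setIntegral_union (Set.Iic_disjoint_Ioc le_rfl) measurableSet_Ioc
      integrable_stdPhi.integrableOn integrable_stdPhi.integrableOn]
    rfl
  linarith

lemma stdPhiCDF_strictMono : StrictMono stdPhiCDF := by
  intro a b hab
  have h := stdPhiCDF_sub hab.le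
  have hpos : 0 < ∫ s in Set.Ioc a b, stdPhi s := by
    rw [setIntegral_pos_iff_support_of_nonneg_ae (ae_of_all _ fun s => (stdPhi_pos s).le)
      integrable_stdPhi.integrableOn]
    have : Function.support stdPhi ∩ Set.Ioc a b = Set.Ioc a b := by
      rw [Set.inter_eq_right]; intro s _; exact (stdPhi_pos s).ne'
    rw [this, Real.volume_Ioc]
    simp [hab]
  linarith

lemma stdPhiCDF_pos (t : ℝ) : 0 < stdPhiCDF t := by
  have h := stdPhiCDF_sub (show t - 1 ≤ t by linarith)
  have h0 : 0 ≤ stdPhiCDF (t - 1) :=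
    setIntegral_nonneg measurableSet_Iic fun s _ => (stdPhi_pos s).le
  have := stdPhiCDF_strictMono (show t - 1 < t by linarith)
  linarith

lemma stdPhiCDF_lt_one (t : ℝ) : stdPhiCDF t < 1 := by
  have h2 : stdPhiCDF t + ∫ s in Set.Ioi t, stdPhi s = 1 := by
    rw [stdPhiCDF, ← integral_stdPhi]
    rw [← integral_add_compl measurableSet_Iic integrable_stdPhi]
    congr 1
    rw [Set.compl_Iic]
  have hpos : 0 < ∫ s in Set.Ioi t, stdPhi s := by
    rw [setIntegral_pos_iff_support_of_nonneg_ae (ae_of_all _ fun s => (stdPhi_pos s).le)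
      integrable_stdPhi.integrableOn]
    have : Function.support stdPhi ∩ Set.Ioi t = Set.Ioi t := by
      rw [Set.inter_eq_right]; intro s _; exact (stdPhi_pos s).ne'
    rw [this, Real.volume_Ioi]
    simp
  linarith

lemma stdPhiCDF_lipschitz {a b : ℝ} (hab : a ≤ b) :
    stdPhiCDF b - stdPhiCDF a ≤ (b - a) * (Real.sqrt (2 * Real.pi))⁻¹ := by
  rw [stdPhiCDF_sub hab]
  have hb : ∀ s ∈ Set.Ioc a b, stdPhi s ≤ (Real.sqrt (2 * Real.pi))⁻¹ := by
    intro s _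
    rw [stdPhi_eq]
    exact mul_le_of_le_one_right (by positivity)
      (Real.exp_le_one_iff.2 (by nlinarith [sq_nonneg s]))
  calc ∫ s in Set.Ioc a b, stdPhi s ≤ ∫ _s in Set.Ioc a b, (Real.sqrt (2 * Real.pi))⁻¹ :=
        setIntegral_mono_on integrable_stdPhi.integrableOn (integrableOn_const (by
          rw [Real.volume_Ioc]; exact ENNReal.ofReal_ne_top)) measurableSet_Ioc hb
    _ = (b - a) * (Real.sqrt (2 * Real.pi))⁻¹ := by
        rw [setIntegral_const, measureReal_def, Real.volume_Ioc, smul_eq_mul, ENNReal.toReal_ofReal (by linarith)]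

lemma continuous_stdPhiCDF : Continuous stdPhiCDF := by
  have : LipschitzWith ⟨(Real.sqrt (2 * Real.pi))⁻¹, by positivity⟩ stdPhiCDF := by
    apply LipschitzWith.of_dist_le_mul
    intro a b
    rcases le_total a b with h | h
    · rw [Real.dist_eq, Real.dist_eq, abs_of_nonpos (by have := stdPhiCDF_strictMono.monotone h; linarith),
        abs_of_nonpos (by linarith)]
      have := stdPhiCDF_lipschitz h
      push_cast
      change _ ≤ (Real.sqrt (2 * Real.pi))⁻¹ * _
      nlinarith
    · rw [Real.dist_eq, Real.dist_eq, abs_of_nonneg (by have := stdPhiCDF_strictMono.monotone h; linarith),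
        abs_of_nonneg (by linarith)]
      have := stdPhiCDF_lipschitz h
      push_cast
      change _ ≤ (Real.sqrt (2 * Real.pi))⁻¹ * _
      nlinarith
  exact this.continuous

noncomputable def psiAux (t u : ℝ) : ℝ := t * Real.log u + (1 - t) * Real.log (1 - u)

lemma psiAux_lt_left {t u v : ℝ} (hu : 0 < u) (huv : u < v) (hvt : v ≤ t) (ht1 : t ≤ 1)
    (hv1 : v < 1) : psiAux t u < psiAux t v := by
  have hv0 : 0 < v := hu.trans huv
  have h1v : 0 < 1 - v := by linarith
  have h1u : 0 < 1 - u := by linarith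
  have hA0 : 0 < Real.log v - Real.log u := by
    have := Real.log_lt_log hu huv; linarith
  have hB0 : 0 ≤ Real.log (1 - u) - Real.log (1 - v) := by
    have := Real.log_le_log h1v (by linarith : 1 - v ≤ 1 - u); linarith
  have hA : v - u < v * (Real.log v - Real.log u) := by
    have h := Real.log_lt_sub_one_of_pos (div_pos hu hv0) (by
      intro h; rw [div_eq_one_iff_eq hv0.ne'] at h; linarith)
    rw [Real.log_div hu.ne' hv0.ne'] at h
    have h2 := mul_lt_mul_of_pos_right h hv0
    have h3 : (u / v - 1) * v = u - v := by field_simp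
    nlinarith
  have hB : (1 - v) * (Real.log (1 - u) - Real.log (1 - v)) ≤ v - u := by
    have h := Real.log_le_sub_one_of_pos (div_pos h1u h1v)
    rw [Real.log_div h1u.ne' h1v.ne'] at h
    have h2 := mul_le_mul_of_nonneg_right h h1v.le
    have h3 : ((1 - u) / (1 - v) - 1) * (1 - v) = v - u := by field_simp; ring
    nlinarith
  have m1 : (1 - t) * (Real.log (1 - u) - Real.log (1 - v)) ≤
      (1 - v) * (Real.log (1 - u) - Real.log (1 - v)) :=
    mul_le_mul_of_nonneg_right (by linarith) hB0
  have m2 : v * (Real.log v - Real.log u) ≤ t * (Real.log v - Real.log u) :=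
    mul_le_mul_of_nonneg_right hvt hA0.le
  have key : (1 - t) * (Real.log (1 - u) - Real.log (1 - v)) <
      t * (Real.log v - Real.log u) := by linarith
  unfold psiAux
  nlinarith [key]

lemma psiAux_lt_right {t u v : ℝ} (hu1 : u < 1) (hvu : v < u) (htv : t ≤ v) (ht0 : 0 ≤ t)
    (hv0 : 0 < v) : psiAux t u < psiAux t v := by
  have h := psiAux_lt_left (t := 1 - t) (u := 1 - u) (v := 1 - v)
    (by linarith) (by linarith) (by linarith) (by linarith) (by linarith)
  unfold psiAux at h ⊢
  rw [sub_sub_cancel, sub_sub_cancel, sub_sub_cancel] at h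
  linarith

lemma psiAux_le_left {t u v : ℝ} (hu : 0 < u) (huv : u ≤ v) (hvt : v ≤ t) (ht1 : t ≤ 1)
    (hv1 : v < 1) : psiAux t u ≤ psiAux t v := by
  rcases eq_or_lt_of_le huv with h | h
  · rw [h]
  · exact (psiAux_lt_left hu h hvt ht1 hv1).le

lemma psiAux_le_right {t u v : ℝ} (hu1 : u < 1) (hvu : v ≤ u) (htv : t ≤ v) (ht0 : 0 ≤ t)
    (hv0 : 0 < v) : psiAux t u ≤ psiAux t v := by
  rcases eq_or_lt_of_le hvu with h | h
  · rw [h]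
  · exact (psiAux_lt_right hu1 h htv ht0 hv0).le

section prior
variable {σ : ℝ} (c : ℝ) (hσ : 0 < σ)

lemma prior_eq (η : ℝ) :
    σ⁻¹ * stdPhi ((η - c) / σ) =
      (σ⁻¹ * (Real.sqrt (2 * Real.pi))⁻¹) * Real.exp (-(1 / (2 * σ ^ 2)) * (η - c) ^ 2) := by
  rw [stdPhi, div_pow, div_eq_mul_inv (Real.exp _), ← Real.sqrt_inv]
  ring_nf

lemma continuous_prior : Continuous fun η : ℝ => σ⁻¹ * stdPhi ((η - c) / σ) := by
  unfold stdPhi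
  fun_prop

include hσ in
lemma integrable_prior : Integrable fun η : ℝ => σ⁻¹ * stdPhi ((η - c) / σ) := by
  have hb : (0:ℝ) < 1 / (2 * σ ^ 2) := by positivity
  have h := ((integrable_exp_neg_mul_sq hb).comp_sub_right c).const_mul
    (σ⁻¹ * (Real.sqrt (2 * Real.pi))⁻¹)
  exact h.congr (ae_of_all _ fun η => (prior_eq c η).symm)

include hσ in
lemma integrable_prior_absmul (η0 : ℝ) :
    Integrable fun η : ℝ => |η - η0| * (σ⁻¹ * stdPhi ((η - c) / σ)) := by
  have hb : (0:ℝ) < 1 / (2 * σ ^ 2) := by positivity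
  set C := σ⁻¹ * (Real.sqrt (2 * Real.pi))⁻¹ with hC
  have hC0 : 0 < C := by positivity
  have h1 : Integrable fun η : ℝ => C * |(η - c) * Real.exp (-(1 / (2 * σ ^ 2)) * (η - c) ^ 2)| :=
    (((integrable_mul_exp_neg_mul_sq hb).abs.comp_sub_right c).const_mul C)
  have h2 : Integrable fun η : ℝ => |c - η0| * (σ⁻¹ * stdPhi ((η - c) / σ)) :=
    (integrable_prior c hσ).const_mul _
  refine Integrable.mono' (h1.add h2) ?_ (ae_of_all _ fun η => ?_)
  · exact ((continuous_abs.comp (by continuity)).mul (continuous_prior c)).aestronglyMeasurable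
  · have hg0 : 0 ≤ σ⁻¹ * stdPhi ((η - c) / σ) :=
      mul_nonneg (by positivity) (stdPhi_pos _).le
    rw [Real.norm_eq_abs, abs_of_nonneg (mul_nonneg (abs_nonneg _) hg0)]
    have htri : |η - η0| ≤ |η - c| + |c - η0| := by
      calc |η - η0| = |(η - c) + (c - η0)| := by ring_nf
        _ ≤ |η - c| + |c - η0| := abs_add_le _ _
    have : |η - η0| * (σ⁻¹ * stdPhi ((η - c) / σ)) ≤
        (|η - c| + |c - η0|) * (σ⁻¹ * stdPhi ((η - c) / σ)) := by
      exact mul_le_mul_of_nonneg_right htri hg0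
    refine this.trans ?_
    rw [add_mul]
    refine add_le_add (le_of_eq ?_) le_rfl
    show _ = C * |(η - c) * rexp (-(1 / (2 * σ ^ 2)) * (η - c) ^ 2)|
    rw [prior_eq c η, abs_mul, abs_of_nonneg (Real.exp_pos _).le, hC]
    ring
end prior

set_option maxHeartbeats 1000000 in
lemma keyLemma (η0 c σ ε : ℝ) (hσ : 0 < σ) (hε : 0 < ε) :
    ∃ δ : ℝ, 0 < δ ∧ ∃ M : ℕ, 1 ≤ M ∧ ∀ m : ℕ, M ≤ m → ∀ k : ℕ, k ≤ m →
      |(k : ℝ) / m - stdPhiCDF η0| ≤ δ →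
      |(∫ η : ℝ, η * (stdPhiCDF η ^ k * (1 - stdPhiCDF η) ^ (m - k) *
            (σ⁻¹ * stdPhi ((η - c) / σ)))) /
        (∫ η : ℝ, stdPhiCDF η ^ k * (1 - stdPhiCDF η) ^ (m - k) *
            (σ⁻¹ * stdPhi ((η - c) / σ))) - η0| ≤ ε := by
  set g : ℝ → ℝ := fun η => σ⁻¹ * stdPhi ((η - c) / σ) with hgdef
  have hg_pos : ∀ η, 0 < g η := fun η => mul_pos (by positivity) (stdPhi_pos _)
  have hg_cont : Continuous g := continuous_prior c
  have hg_int : Integrable g := integrable_prior c hσ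
  have hg1_int : Integrable fun η => |η - η0| * g η := integrable_prior_absmul c hσ η0
  have hp0 : 0 < stdPhiCDF η0 := stdPhiCDF_pos η0
  have hp1 : stdPhiCDF η0 < 1 := stdPhiCDF_lt_one η0
  set p := stdPhiCDF η0 with hpdef
  set ε' : ℝ := ε / 2 with hε'def
  have hε'0 : 0 < ε' := by positivity
  set q1 := stdPhiCDF (η0 - ε') with hq1def
  set q2 := stdPhiCDF (η0 + ε') with hq2def
  have hq10 : 0 < q1 := stdPhiCDF_pos _
  have hq21 : q2 < 1 := stdPhiCDF_lt_one _
  have hq1p : q1 < p := stdPhiCDF_strictMono (by linarith)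
  have hpq2 : p < q2 := stdPhiCDF_strictMono (by linarith)
  set G := psiAux p p - max (psiAux p q1) (psiAux p q2) with hGdef
  have hG0 : 0 < G := by
    have h1 : psiAux p q1 < psiAux p p := psiAux_lt_left hq10 hq1p le_rfl hp1.le hp1
    have h2 : psiAux p q2 < psiAux p p := psiAux_lt_right hq21 hpq2 le_rfl hp0.le hp0
    have h3 := max_lt h1 h2
    rw [hGdef]; linarith
  -- choose inner radius r
  have hFc : Continuous fun s : ℝ => stdPhiCDF (η0 + s) :=
    continuous_stdPhiCDF.comp (continuous_const.add continuous_id)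
  have hcont : ContinuousAt (fun s : ℝ => psiAux p (stdPhiCDF (η0 + s))) 0 := by
    have h1 : ContinuousAt (fun s : ℝ => Real.log (stdPhiCDF (η0 + s))) 0 :=
      ContinuousAt.log hFc.continuousAt (stdPhiCDF_pos _).ne'
    have h2 : ContinuousAt (fun s : ℝ => Real.log (1 - stdPhiCDF (η0 + s))) 0 :=
      ContinuousAt.log (continuous_const.sub hFc).continuousAt
        (by have := stdPhiCDF_lt_one (η0 + 0); exact (by linarith : (0:ℝ) < 1 - stdPhiCDF (η0 + 0)).ne')
    unfold psiAux
    exact (continuousAt_const.mul h1).add (continuousAt_const.mul h2)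
  have hmem : ∀ᶠ s in nhds (0 : ℝ), psiAux p p - G / 4 < psiAux p (stdPhiCDF (η0 + s)) := by
    refine hcont.eventually (eventually_gt_nhds ?_)
    show psiAux p p - G / 4 < psiAux p (stdPhiCDF (η0 + 0))
    rw [add_zero, ← hpdef]
    linarith
  obtain ⟨r0, hr00, hr0⟩ := Metric.eventually_nhds_iff.mp hmem
  set r : ℝ := min (r0 / 2) (ε' / 2) with hrdef
  have hr0' : 0 < r := by rw [hrdef]; positivity
  have hrε' : r < ε' := by rw [hrdef]; have := min_le_right (r0/2) (ε'/2); linarith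
  have hJ : ∀ s : ℝ, |s| ≤ r → psiAux p p - G / 4 < psiAux p (stdPhiCDF (η0 + s)) := by
    intro s hs
    refine hr0 ?_
    rw [Real.dist_eq, sub_zero]
    have := min_le_left (r0/2) (ε'/2)
    rw [hrdef] at hs; linarith
  -- logit bounds
  set LJ : ℝ := -Real.log (stdPhiCDF (η0 - r)) - Real.log (1 - stdPhiCDF (η0 + r)) with hLJdef
  set LR : ℝ := -Real.log q1 - Real.log (1 - q2) with hLRdef
  set L : ℝ := LJ + LR with hLdef
  have hlogneg : ∀ u : ℝ, 0 < u → u < 1 → Real.log u < 0 := fun u h1 h2 => Real.log_neg h1 h2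
  have hLJ0 : 0 ≤ LJ := by
    have h1 := hlogneg _ (stdPhiCDF_pos (η0 - r)) (stdPhiCDF_lt_one (η0 - r))
    have h2 := hlogneg _ (by linarith [stdPhiCDF_lt_one (η0 + r)] : (0:ℝ) < 1 - stdPhiCDF (η0 + r))
      (by linarith [stdPhiCDF_pos (η0 + r)])
    rw [hLJdef]; linarith
  have hLR0 : 0 ≤ LR := by
    have h1 := hlogneg _ hq10 (by linarith : q1 < 1)
    have h2 := hlogneg _ (by linarith : (0:ℝ) < 1 - q2) (by linarith [stdPhiCDF_pos (η0 + ε')])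
    rw [hLRdef]; linarith
  have hL0 : 0 ≤ L := by rw [hLdef]; linarith
  have hpert : ∀ t u : ℝ, psiAux t u - psiAux p u = (t - p) * (Real.log u - Real.log (1 - u)) := by
    intro t u; unfold psiAux; ring
  have hlogitJ : ∀ η : ℝ, |η - η0| ≤ r → |Real.log (stdPhiCDF η) - Real.log (1 - stdPhiCDF η)| ≤ L := by
    intro η hη
    obtain ⟨h1, h2⟩ := abs_le.mp hη
    have hF1 : stdPhiCDF (η0 - r) ≤ stdPhiCDF η := stdPhiCDF_strictMono.monotone (by linarith)
    have hF2 : stdPhiCDF η ≤ stdPhiCDF (η0 + r) := stdPhiCDF_strictMono.monotone (by linarith)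
    have hFη0 := stdPhiCDF_pos η
    have hFη1 := stdPhiCDF_lt_one η
    have e1 : |Real.log (stdPhiCDF η)| ≤ -Real.log (stdPhiCDF (η0 - r)) := by
      rw [abs_of_nonpos (hlogneg _ hFη0 hFη1).le]
      have := Real.log_le_log (stdPhiCDF_pos (η0 - r)) hF1; linarith
    have e2 : |Real.log (1 - stdPhiCDF η)| ≤ -Real.log (1 - stdPhiCDF (η0 + r)) := by
      rw [abs_of_nonpos (hlogneg _ (by linarith) (by linarith)).le]
      have := Real.log_le_log (by linarith [stdPhiCDF_lt_one (η0 + r)] :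
        (0:ℝ) < 1 - stdPhiCDF (η0 + r)) (by linarith : 1 - stdPhiCDF (η0 + r) ≤ 1 - stdPhiCDF η)
      linarith
    calc |Real.log (stdPhiCDF η) - Real.log (1 - stdPhiCDF η)|
        ≤ |Real.log (stdPhiCDF η)| + |Real.log (1 - stdPhiCDF η)| := abs_sub _ _
      _ ≤ LJ := by rw [hLJdef]; linarith
      _ ≤ L := by rw [hLdef]; linarith
  have hlogitR : ∀ u : ℝ, q1 ≤ u → u ≤ q2 → |Real.log u - Real.log (1 - u)| ≤ L := by
    intro u hu1 hu2
    have hu0 : 0 < u := lt_of_lt_of_le hq10 hu1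
    have hu1' : u < 1 := lt_of_le_of_lt hu2 hq21
    have e1 : |Real.log u| ≤ -Real.log q1 := by
      rw [abs_of_nonpos (hlogneg _ hu0 hu1').le]
      have := Real.log_le_log hq10 hu1; linarith
    have e2 : |Real.log (1 - u)| ≤ -Real.log (1 - q2) := by
      rw [abs_of_nonpos (hlogneg _ (by linarith) (by linarith)).le]
      have := Real.log_le_log (by linarith : (0:ℝ) < 1 - q2) (by linarith : 1 - q2 ≤ 1 - u)
      linarith
    calc |Real.log u - Real.log (1 - u)| ≤ |Real.log u| + |Real.log (1 - u)| := abs_sub _ _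
      _ ≤ LR := by rw [hLRdef]; linarith
      _ ≤ L := by rw [hLdef]; linarith
  -- choose δ
  set δ : ℝ := min (min ((p - q1) / 2) ((q2 - p) / 2)) (G / (8 * (L + 1))) with hδdef
  have hδ0 : 0 < δ := by
    rw [hδdef]
    refine lt_min (lt_min (by linarith) (by linarith)) (by positivity)
  have hδL : δ * L ≤ G / 8 := by
    have h1 : δ ≤ G / (8 * (L + 1)) := min_le_right _ _
    have h2 : δ * L ≤ G / (8 * (L + 1)) * L := mul_le_mul_of_nonneg_right h1 hL0
    have h3 : G / (8 * (L + 1)) * L ≤ G / 8 := by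
      rw [div_mul_eq_mul_div, div_le_div_iff₀ (by positivity) (by norm_num)]
      nlinarith
    linarith
  have hδq1 : δ ≤ (p - q1) / 2 := le_trans (min_le_left _ _) (min_le_left _ _)
  have hδq2 : δ ≤ (q2 - p) / 2 := le_trans (min_le_left _ _) (min_le_right _ _)
  set a : ℝ := max (psiAux p q1) (psiAux p q2) + δ * L with hadef
  set b : ℝ := psiAux p p - G / 4 - δ * L with hbdef
  have hba : G / 2 ≤ b - a := by
    rw [hadef, hbdef]
    have : psiAux p p - max (psiAux p q1) (psiAux p q2) = G := by rw [hGdef]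
    linarith
  clear_value a b δ L LR LJ r G q2 q1 ε' p
  -- region bound
  have hregion : ∀ t : ℝ, |t - p| ≤ δ → ∀ η : ℝ, ε' ≤ |η - η0| → psiAux t (stdPhiCDF η) ≤ a := by
    intro t ht η hη
    obtain ⟨ht1, ht2⟩ := abs_le.mp ht
    have htq1 : q1 ≤ t := by linarith
    have htq2 : t ≤ q2 := by linarith
    have ht0 : 0 < t := lt_of_lt_of_le hq10 htq1
    have htl1 : t < 1 := lt_of_le_of_lt htq2 hq21
    rcases le_or_gt η η0 with hc | hc
    · have hηle : η ≤ η0 - ε' := by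
        rw [abs_of_nonpos (by linarith : η - η0 ≤ 0)] at hη; linarith
      have hFle : stdPhiCDF η ≤ q1 := by
        rw [hq1def]; exact stdPhiCDF_strictMono.monotone (by linarith)
      have s1 : psiAux t (stdPhiCDF η) ≤ psiAux t q1 :=
        psiAux_le_left (stdPhiCDF_pos η) hFle htq1 htl1.le (by linarith : q1 < 1)
      have s2 : psiAux t q1 - psiAux p q1 ≤ δ * L := by
        have h := hpert t q1
        have h2 := hlogitR q1 le_rfl (by linarith)
        calc psiAux t q1 - psiAux p q1 = (t - p) * (Real.log q1 - Real.log (1 - q1)) := h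
          _ ≤ |(t - p) * (Real.log q1 - Real.log (1 - q1))| := le_abs_self _
          _ = |t - p| * |Real.log q1 - Real.log (1 - q1)| := abs_mul _ _
          _ ≤ δ * L := mul_le_mul ht h2 (abs_nonneg _) hδ0.le
      have s3 : psiAux p q1 ≤ max (psiAux p q1) (psiAux p q2) := le_max_left _ _
      rw [hadef]; linarith
    · have hηge : η0 + ε' ≤ η := by
        rw [abs_of_nonneg (by linarith : (0:ℝ) ≤ η - η0)] at hη; linarith
      have hFge : q2 ≤ stdPhiCDF η := by
        rw [hq2def]; exact stdPhiCDF_strictMono.monotone (by linarith)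
      have s1 : psiAux t (stdPhiCDF η) ≤ psiAux t q2 :=
        psiAux_le_right (stdPhiCDF_lt_one η) hFge htq2 ht0.le (by linarith : 0 < q2)
      have s2 : psiAux t q2 - psiAux p q2 ≤ δ * L := by
        have h := hpert t q2
        have h2 := hlogitR q2 (by linarith) le_rfl
        calc psiAux t q2 - psiAux p q2 = (t - p) * (Real.log q2 - Real.log (1 - q2)) := h
          _ ≤ |(t - p) * (Real.log q2 - Real.log (1 - q2))| := le_abs_self _
          _ = |t - p| * |Real.log q2 - Real.log (1 - q2)| := abs_mul _ _
          _ ≤ δ * L := mul_le_mul ht h2 (abs_nonneg _) hδ0.le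
      have s3 : psiAux p q2 ≤ max (psiAux p q1) (psiAux p q2) := le_max_right _ _
      rw [hadef]; linarith
  -- inner bound
  have hJb : ∀ t : ℝ, |t - p| ≤ δ → ∀ η : ℝ, |η - η0| ≤ r → b ≤ psiAux t (stdPhiCDF η) := by
    intro t ht η hη
    have h1 : psiAux p p - G / 4 < psiAux p (stdPhiCDF η) := by
      have := hJ (η - η0) hη
      rwa [add_sub_cancel] at this
    have h2 : psiAux p (stdPhiCDF η) - psiAux t (stdPhiCDF η) ≤ δ * L := by
      have h := hpert t (stdPhiCDF η)
      have h3 := hlogitJ η hη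
      calc psiAux p (stdPhiCDF η) - psiAux t (stdPhiCDF η)
          = -((t - p) * (Real.log (stdPhiCDF η) - Real.log (1 - stdPhiCDF η))) := by linarith
        _ ≤ |(t - p) * (Real.log (stdPhiCDF η) - Real.log (1 - stdPhiCDF η))| := neg_le_abs _
        _ = |t - p| * |Real.log (stdPhiCDF η) - Real.log (1 - stdPhiCDF η)| := abs_mul _ _
        _ ≤ δ * L := mul_le_mul ht h3 (abs_nonneg _) hδ0.le
    rw [hbdef]; linarith
  -- constants
  set J : Set ℝ := Set.Icc (η0 - r) (η0 + r) with hJdef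
  set c0 : ℝ := ∫ η in J, g η with hc0def
  have hc00 : 0 < c0 := by
    rw [hc0def, setIntegral_pos_iff_support_of_nonneg_ae
      (ae_of_all _ fun η => (hg_pos η).le) hg_int.integrableOn]
    have hsup : Function.support g ∩ J = J := Set.inter_eq_right.2 fun η _ => (hg_pos η).ne'
    rw [hsup, hJdef, Real.volume_Icc]
    rw [ENNReal.ofReal_pos]
    linarith
  set C1 : ℝ := ∫ η, |η - η0| * g η with hC1def
  have hC10 : 0 ≤ C1 := by
    rw [hC1def]
    exact integral_nonneg fun η => mul_nonneg (abs_nonneg _) (hg_pos _).le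
  clear_value J c0 C1
  -- choose M
  set M : ℕ := max 1 ⌈C1 / (c0 * (G / 2) * ε')⌉₊ with hMdef
  have hexpM : ∀ m : ℕ, M ≤ m → Real.exp (-((m : ℝ) * (G / 2))) * C1 / c0 ≤ ε' := by
    intro m hm
    rw [hMdef] at hm
    have hm1 : (1 : ℕ) ≤ m := le_trans (le_max_left _ _) hm
    have hm0 : (0:ℝ) < m := by exact_mod_cast hm1
    have hceil : C1 / (c0 * (G / 2) * ε') ≤ (m : ℝ) := by
      refine (Nat.le_ceil _).trans ?_
      exact_mod_cast le_trans (le_max_right _ _) hm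
    have hC1le : C1 ≤ (m : ℝ) * (G / 2) * c0 * ε' := by
      have h := (div_le_iff₀ (by positivity : (0:ℝ) < c0 * (G / 2) * ε')).1 hceil
      nlinarith
    have hz : 0 < (m : ℝ) * (G / 2) := by positivity
    have hexp_le : Real.exp (-((m : ℝ) * (G / 2))) ≤ ((m : ℝ) * (G / 2))⁻¹ := by
      rw [Real.exp_neg]
      have h1 : (m : ℝ) * (G / 2) ≤ Real.exp ((m : ℝ) * (G / 2)) := by
        have := Real.add_one_le_exp ((m : ℝ) * (G / 2)); linarith
      exact inv_anti₀ hz h1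
    rw [div_le_iff₀ hc00]
    calc Real.exp (-((m : ℝ) * (G / 2))) * C1 ≤ ((m : ℝ) * (G / 2))⁻¹ * C1 :=
          mul_le_mul_of_nonneg_right hexp_le hC10
      _ ≤ ε' * c0 := by
          rw [inv_mul_le_iff₀ hz]
          nlinarith
  refine ⟨δ, hδ0, M, by rw [hMdef]; exact le_max_left _ _, ?_⟩
  intro m hm k hk ht

  have hm1 : (1 : ℕ) ≤ m := le_trans (by rw [hMdef]; exact le_max_left _ _) hm
  have hm0 : (0:ℝ) < m := by exact_mod_cast hm1
  set t : ℝ := (k : ℝ) / m with htdef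
  set w : ℝ → ℝ := fun η => stdPhiCDF η ^ k * (1 - stdPhiCDF η) ^ (m - k) with hwdef
  have hw_eq : ∀ η, w η = Real.exp ((m:ℝ) * psiAux t (stdPhiCDF η)) := by
    intro η
    have hFη0 := stdPhiCDF_pos η
    have hFη1 := stdPhiCDF_lt_one η
    have hk' : ((m - k : ℕ) : ℝ) = (m:ℝ) - k := by
      rw [Nat.cast_sub hk]
    have e1 : (m:ℝ) * (t * Real.log (stdPhiCDF η)) = (k:ℝ) * Real.log (stdPhiCDF η) := by
      rw [htdef]
      try field_simp
    have e2 : (m:ℝ) * ((1 - t) * Real.log (1 - stdPhiCDF η)) =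
        ((m - k : ℕ):ℝ) * Real.log (1 - stdPhiCDF η) := by
      rw [htdef, hk']
      try field_simp
      try ring
    rw [hwdef]
    show stdPhiCDF η ^ k * (1 - stdPhiCDF η) ^ (m - k) = _
    unfold psiAux
    rw [mul_add, Real.exp_add, e1, e2, Real.exp_nat_mul, Real.exp_nat_mul,
      Real.exp_log hFη0, Real.exp_log (by linarith : (0:ℝ) < 1 - stdPhiCDF η)]
  have hw_nonneg : ∀ η, 0 ≤ w η := fun η => by
    rw [hw_eq η]; positivity
  have hw_le_one : ∀ η, w η ≤ 1 := by
    intro η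
    have hFη0 := stdPhiCDF_pos η
    have hFη1 := stdPhiCDF_lt_one η
    rw [hwdef]
    show stdPhiCDF η ^ k * (1 - stdPhiCDF η) ^ (m - k) ≤ 1
    have h1 : stdPhiCDF η ^ k ≤ 1 := pow_le_one₀ hFη0.le hFη1.le
    have h2 : (1 - stdPhiCDF η) ^ (m - k) ≤ 1 := pow_le_one₀ (by linarith) (by linarith)
    nlinarith [pow_nonneg hFη0.le k, pow_nonneg (by linarith : (0:ℝ) ≤ 1 - stdPhiCDF η) (m-k)]
  have hw_cont : Continuous w := by
    rw [hwdef]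
    exact (continuous_stdPhiCDF.pow k).mul
      ((continuous_const.sub continuous_stdPhiCDF).pow (m - k))
  have hwg_int : Integrable fun η => w η * g η :=
    hg_int.bdd_mul hw_cont.aestronglyMeasurable
      (ae_of_all _ fun η => by rw [Real.norm_eq_abs, abs_of_nonneg (hw_nonneg η)]; exact hw_le_one η)
  have habswg_int : Integrable fun η => |η - η0| * (w η * g η) := by
    have h : Integrable fun η => w η * (|η - η0| * g η) :=
      hg1_int.bdd_mul hw_cont.aestronglyMeasurable
        (ae_of_all _ fun η => by rw [Real.norm_eq_abs, abs_of_nonneg (hw_nonneg η)]; exact hw_le_one η)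
    exact h.congr (ae_of_all _ fun η => by ring)
  have hηwg_int : Integrable fun η => η * (w η * g η) := by
    refine Integrable.mono' (habswg_int.add ((hwg_int.const_mul |η0|)))
      ((continuous_id.mul (hw_cont.mul hg_cont)).aestronglyMeasurable)
      (ae_of_all _ fun η => ?_)
    rw [Real.norm_eq_abs, abs_mul, abs_of_nonneg (mul_nonneg (hw_nonneg η) (hg_pos η).le)]
    have h2 : |η| ≤ |η - η0| + |η0| := by
      calc |η| = |(η - η0) + η0| := by ring_nf
        _ ≤ |η - η0| + |η0| := abs_add_le _ _
    calc |η| * (w η * g η) ≤ (|η - η0| + |η0|) * (w η * g η) :=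
          mul_le_mul_of_nonneg_right h2 (mul_nonneg (hw_nonneg η) (hg_pos η).le)
      _ = |η - η0| * (w η * g η) + |η0| * (w η * g η) := by ring
  have hub : ∀ η : ℝ, ε' ≤ |η - η0| → w η ≤ Real.exp ((m:ℝ) * a) := by
    intro η hη
    rw [hw_eq η]
    exact Real.exp_le_exp.2 (mul_le_mul_of_nonneg_left (hregion t ht η hη) hm0.le)
  have hlb : ∀ η : ℝ, η ∈ J → Real.exp ((m:ℝ) * b) ≤ w η := by
    intro η hη
    rw [hw_eq η]
    refine Real.exp_le_exp.2 (mul_le_mul_of_nonneg_left (hJb t ht η ?_) hm0.le)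
    rw [hJdef] at hη
    obtain ⟨h1, h2⟩ := hη
    rw [abs_le]; constructor <;> linarith
  have hDlb : Real.exp ((m:ℝ) * b) * c0 ≤ ∫ η, w η * g η := by
    have step1 : Real.exp ((m:ℝ) * b) * c0 = ∫ η in J, Real.exp ((m:ℝ) * b) * g η := by
      rw [MeasureTheory.integral_const_mul, hc0def]
    rw [step1]
    refine le_trans (setIntegral_mono_on ((hg_int.const_mul _).integrableOn)
      hwg_int.integrableOn (by rw [hJdef]; exact measurableSet_Icc) ?_) ?_
    · intro η hη
      exact mul_le_mul_of_nonneg_right (hlb η hη) (hg_pos η).le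
    · exact setIntegral_le_integral hwg_int
        (ae_of_all _ fun η => mul_nonneg (hw_nonneg η) (hg_pos η).le)
  have hD0 : 0 < ∫ η, w η * g η := lt_of_lt_of_le (by positivity) hDlb
  have hNb : |(∫ η, η * (w η * g η)) - η0 * ∫ η, w η * g η| ≤
      ε' * (∫ η, w η * g η) + Real.exp ((m:ℝ) * a) * C1 := by
    have hsub : (∫ η, η * (w η * g η)) - η0 * ∫ η, w η * g η
        = ∫ η, (η - η0) * (w η * g η) := by
      rw [← MeasureTheory.integral_const_mul, ← integral_sub hηwg_int (hwg_int.const_mul η0)]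
      exact integral_congr_ae (ae_of_all _ fun η => by ring)
    rw [hsub]
    have habs : |∫ η, (η - η0) * (w η * g η)| ≤ ∫ η, |η - η0| * (w η * g η) := by
      calc |∫ η, (η - η0) * (w η * g η)| = ‖∫ η, (η - η0) * (w η * g η)‖ :=
            (Real.norm_eq_abs _).symm
        _ ≤ ∫ η, ‖(η - η0) * (w η * g η)‖ := norm_integral_le_integral_norm _
        _ = ∫ η, |η - η0| * (w η * g η) := integral_congr_ae (ae_of_all _ fun η => by
            show ‖(η - η0) * (w η * g η)‖ = |η - η0| * (w η * g η)
            rw [Real.norm_eq_abs, abs_mul, abs_of_nonneg (mul_nonneg (hw_nonneg η) (hg_pos η).le)])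
    refine habs.trans ?_
    have hsplit : ∫ η, |η - η0| * (w η * g η)
        = (∫ η in Metric.closedBall η0 ε', |η - η0| * (w η * g η))
          + ∫ η in (Metric.closedBall η0 ε')ᶜ, |η - η0| * (w η * g η) := by
      rw [integral_add_compl measurableSet_closedBall habswg_int]
    rw [hsplit]
    have hS : ∫ η in Metric.closedBall η0 ε', |η - η0| * (w η * g η)
        ≤ ε' * ∫ η, w η * g η := by
      refine le_trans (setIntegral_mono_on habswg_int.integrableOn
        ((hwg_int.const_mul ε').integrableOn) measurableSet_closedBall ?_) ?_
      · intro η hη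
        have hd : |η - η0| ≤ ε' := by
          have := Metric.mem_closedBall.1 hη; rwa [Real.dist_eq] at this
        exact mul_le_mul_of_nonneg_right hd (mul_nonneg (hw_nonneg η) (hg_pos η).le)
      · rw [MeasureTheory.integral_const_mul]
        exact mul_le_mul_of_nonneg_left (setIntegral_le_integral hwg_int
          (ae_of_all _ fun η => mul_nonneg (hw_nonneg η) (hg_pos η).le)) hε'0.le
    have hSc : ∫ η in (Metric.closedBall η0 ε')ᶜ, |η - η0| * (w η * g η)
        ≤ Real.exp ((m:ℝ) * a) * C1 := by
      refine le_trans (setIntegral_mono_on habswg_int.integrableOn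
        ((hg1_int.const_mul (Real.exp ((m:ℝ) * a))).integrableOn)
        measurableSet_closedBall.compl ?_) ?_
      · intro η hη
        have hout : ε' ≤ |η - η0| := by
          have h' : ¬ dist η η0 ≤ ε' := fun hle => hη (Metric.mem_closedBall.2 hle)
          rw [Real.dist_eq] at h'
          linarith [lt_of_not_ge h']
        calc |η - η0| * (w η * g η) = w η * (|η - η0| * g η) := by ring
          _ ≤ Real.exp ((m:ℝ) * a) * (|η - η0| * g η) :=
            mul_le_mul_of_nonneg_right (hub η hout)
              (mul_nonneg (abs_nonneg _) (hg_pos η).le)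
      · rw [MeasureTheory.integral_const_mul]
        refine mul_le_mul_of_nonneg_left ?_ (Real.exp_pos _).le
        rw [hC1def]
        exact setIntegral_le_integral hg1_int
          (ae_of_all _ fun η => mul_nonneg (abs_nonneg _) (hg_pos η).le)
    linarith
  have hfinal : |(∫ η, η * (w η * g η)) / (∫ η, w η * g η) - η0| ≤ ε := by
    have h1 : (∫ η, η * (w η * g η)) / (∫ η, w η * g η) - η0
        = ((∫ η, η * (w η * g η)) - η0 * ∫ η, w η * g η) / (∫ η, w η * g η) := by
      field_simp
    rw [h1, abs_div, abs_of_pos hD0, div_le_iff₀ hD0]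
    have h2 : Real.exp ((m:ℝ) * a) * C1 ≤ ε' * ∫ η, w η * g η := by
      have h5 : (m:ℝ) * a ≤ (m:ℝ) * b + -((m:ℝ) * (G/2)) := by nlinarith [hba, hm0.le]
      have h6 : Real.exp ((m:ℝ) * a) ≤ Real.exp ((m:ℝ) * b) * Real.exp (-((m:ℝ) * (G/2))) := by
        rw [← Real.exp_add]
        exact Real.exp_le_exp.2 h5
      have h7 : Real.exp ((m:ℝ) * a) * C1 ≤
          Real.exp ((m:ℝ) * b) * (Real.exp (-((m:ℝ) * (G/2))) * C1) := by
        have := mul_le_mul_of_nonneg_right h6 hC10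
        nlinarith [this]
      have h8 : Real.exp (-((m:ℝ) * (G/2))) * C1 ≤ ε' * c0 := by
        have h9 := hexpM m hm
        rw [div_le_iff₀ hc00] at h9
        linarith
      have h10 : Real.exp ((m:ℝ) * a) * C1 ≤ ε' * (Real.exp ((m:ℝ) * b) * c0) := by
        calc Real.exp ((m:ℝ) * a) * C1
            ≤ Real.exp ((m:ℝ) * b) * (Real.exp (-((m:ℝ) * (G/2))) * C1) := h7
          _ ≤ Real.exp ((m:ℝ) * b) * (ε' * c0) :=
              mul_le_mul_of_nonneg_left h8 (Real.exp_pos _).le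
          _ = ε' * (Real.exp ((m:ℝ) * b) * c0) := by ring
      exact h10.trans (mul_le_mul_of_nonneg_left hDlb hε'0.le)
    have hεε : ε' + ε' = ε := by rw [hε'def]; ring
    have hεD : ε * (∫ η, w η * g η) =
        ε' * (∫ η, w η * g η) + ε' * (∫ η, w η * g η) := by rw [← hεε]; ring
    linarith [hNb, h2, hεD]
  simp only [hwdef, hgdef] at hfinal
  exact hfinal

open Classical in
lemma prod_probit (y : ℕ → ℝ) (hval : ∀ j, y j = 0 ∨ y j = 1) (m : ℕ) (η : ℝ) :
    (∏ j ∈ Finset.range m, probitDens (y j) η) =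
      stdPhiCDF η ^ ((Finset.range m).filter (fun j => y j = 1)).card *
      (1 - stdPhiCDF η) ^ (m - ((Finset.range m).filter (fun j => y j = 1)).card) := by
  rw [← Finset.prod_filter_mul_prod_filter_not (Finset.range m) (fun j => y j = 1)]
  congr 1
  · rw [Finset.prod_congr rfl (fun j hj => ?_), Finset.prod_const]
    have := (Finset.mem_filter.1 hj).2
    rw [probitDens, if_pos this]
  · rw [Finset.prod_congr rfl (fun j hj => ?_), Finset.prod_const]
    · congr 1
      have h := Finset.card_filter_add_card_filter_not
        (s := Finset.range m) (p := fun j => y j = 1)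
      rw [Finset.card_range] at h
      omega
    · have := (Finset.mem_filter.1 hj).2
      rw [probitDens, if_neg this]

open Classical in
lemma sum_eq_card (y : ℕ → ℝ) (hval : ∀ j, y j = 0 ∨ y j = 1) (m : ℕ) :
    ∑ j ∈ Finset.range m, y j = ((Finset.range m).filter (fun j => y j = 1)).card := by
  rw [← Finset.sum_boole]
  refine Finset.sum_congr rfl fun j _ => ?_
  rcases hval j with h | h <;> simp [h]

/-- The posterior mean of the linear predictor converges in probability to its true value η0. -/
theorem stmt4 {Ω : Type*} [MeasurableSpace Ω] (P : Measure Ω) [IsProbabilityMeasure P]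
    (η0 x β σ : ℝ) (hσ : 0 < σ)
    (Y : ℕ → Ω → ℝ) (hmeas : ∀ j, Measurable (Y j))
    (hindep : iIndepFun Y P)
    (hval : ∀ j ω, Y j ω = 0 ∨ Y j ω = 1)
    (hdist : ∀ j, P {ω | Y j ω = 1} = ENNReal.ofReal (stdPhiCDF η0)) :
    ∀ ε > 0,
      Tendsto
        (fun m => P {ω |
          ε < |(∫ η : ℝ,
                  η * ((∏ j ∈ Finset.range m, probitDens (Y j ω) η) * (σ⁻¹ * stdPhi ((η - β * x) / σ))))
               / (∫ η : ℝ,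
                  (∏ j ∈ Finset.range m, probitDens (Y j ω) η) * (σ⁻¹ * stdPhi ((η - β * x) / σ)))
               - η0|})
        atTop (nhds 0) := by
  classical
  intro ε hε
  set p := stdPhiCDF η0 with hpdef
  have hp0 : 0 < p := stdPhiCDF_pos η0
  have hp1 : p < 1 := stdPhiCDF_lt_one η0
  obtain ⟨δ, hδ0, M, hM1, hKey⟩ := keyLemma η0 (β * x) σ ε hσ hε
  -- moment facts
  have hmemLp : ∀ j, MemLp (Y j) 2 P := fun j =>
    MemLp.of_bound (hmeas j).aestronglyMeasurable 1
      (ae_of_all _ fun ω => by rcases hval j ω with h | h <;> simp [h])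
  have hmean : ∀ j, (∫ ω, Y j ω ∂P) = p := by
    intro j
    have hYind : Y j = Set.indicator {ω | Y j ω = 1} (fun _ => (1:ℝ)) := by
      funext ω
      rcases hval j ω with h | h
      · rw [h, Set.indicator_apply, if_neg (by simp [h])]
      · rw [h, Set.indicator_apply, if_pos (by simp [h])]
    have hAm : MeasurableSet {ω | Y j ω = 1} := by
      have : {ω | Y j ω = 1} = Y j ⁻¹' {1} := rfl
      rw [this]; exact hmeas j (measurableSet_singleton 1)
    calc (∫ ω, Y j ω ∂P) = ∫ ω, Set.indicator {ω | Y j ω = 1} (fun _ => (1:ℝ)) ω ∂P := by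
          rw [← hYind]
      _ = ∫ ω in {ω | Y j ω = 1}, (1:ℝ) ∂P := integral_indicator hAm
      _ = (P {ω | Y j ω = 1}).toReal • (1:ℝ) := by rw [setIntegral_const, measureReal_def]
      _ = p := by rw [hdist j, smul_eq_mul, mul_one, ENNReal.toReal_ofReal hp0.le]
  have hvar : ∀ j, variance (Y j) P ≤ 1 := by
    intro j
    rw [variance_eq_sub (hmemLp j)]
    have hsq : (∫ ω, (Y j ^ 2) ω ∂P) = ∫ ω, Y j ω ∂P := by
      refine integral_congr_ae (ae_of_all _ fun ω => ?_)
      show Y j ω ^ 2 = Y j ω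
      rcases hval j ω with h | h <;> rw [h] <;> norm_num
    rw [hsq, hmean j]
    nlinarith
  set X : ℕ → Ω → ℝ := fun m => ∑ j ∈ Finset.range m, Y j with hXdef
  have hXapp : ∀ m ω, X m ω = ∑ j ∈ Finset.range m, Y j ω := by
    intro m ω; rw [hXdef]; simp [Finset.sum_apply]
  have hXmem : ∀ m, MemLp (X m) 2 P := fun m => by
    rw [hXdef]; exact memLp_finset_sum' _ (fun j _ => hmemLp j)
  have hXmean : ∀ m, (∫ ω, X m ω ∂P) = m * p := by
    intro m
    have h1 : (∫ ω, X m ω ∂P) = ∑ j ∈ Finset.range m, ∫ ω, Y j ω ∂P := by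
      simp only [hXapp]
      exact integral_finset_sum _ fun j _ => (hmemLp j).integrable (by norm_num)
    rw [h1, Finset.sum_congr rfl fun j _ => hmean j, Finset.sum_const, Finset.card_range,
      nsmul_eq_mul]
  have hXvar : ∀ m, variance (X m) P ≤ m := by
    intro m
    rw [hXdef]
    rw [IndepFun.variance_sum (fun j _ => hmemLp j)
      (fun i _ j _ hij => hindep.indepFun hij)]
    calc ∑ j ∈ Finset.range m, variance (Y j) P ≤ ∑ _j ∈ Finset.range m, (1:ℝ) :=
          Finset.sum_le_sum fun j _ => hvar j
      _ = m := by simp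
  have hbound : ∀ m : ℕ, max M 1 ≤ m →
      P {ω |
          ε < |(∫ η : ℝ,
                  η * ((∏ j ∈ Finset.range m, probitDens (Y j ω) η) * (σ⁻¹ * stdPhi ((η - β * x) / σ))))
               / (∫ η : ℝ,
                  (∏ j ∈ Finset.range m, probitDens (Y j ω) η) * (σ⁻¹ * stdPhi ((η - β * x) / σ)))
               - η0|} ≤ ENNReal.ofReal (1 / (m * δ ^ 2)) := by
    intro m hm
    have hmM : M ≤ m := le_trans (le_max_left _ _) hm
    have hm1 : 1 ≤ m := le_trans (le_max_right _ _) hm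
    have hm0 : (0:ℝ) < m := by exact_mod_cast hm1
    have hsub : {ω |
          ε < |(∫ η : ℝ,
                  η * ((∏ j ∈ Finset.range m, probitDens (Y j ω) η) * (σ⁻¹ * stdPhi ((η - β * x) / σ))))
               / (∫ η : ℝ,
                  (∏ j ∈ Finset.range m, probitDens (Y j ω) η) * (σ⁻¹ * stdPhi ((η - β * x) / σ)))
               - η0|} ⊆ {ω | (m:ℝ) * δ ≤ |X m ω - ∫ ω', X m ω' ∂P|} := by
      intro ω hω
      by_contra hcon
      simp only [Set.mem_setOf_eq, not_le] at hcon
      set k : ℕ := ((Finset.range m).filter (fun j => Y j ω = 1)).card with hkdef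
      have hkm : k ≤ m := by
        rw [hkdef]
        exact le_trans (Finset.card_filter_le _ _) (le_of_eq (Finset.card_range m))
      have hXk : X m ω = k := by
        rw [hXapp]
        exact sum_eq_card (fun j => Y j ω) (fun j => hval j ω) m
      have hkp : |(k:ℝ)/m - p| ≤ δ := by
        rw [hXmean m, hXk] at hcon
        have heq : (k:ℝ)/m - p = ((k:ℝ) - m*p)/m := by field_simp
        rw [heq, abs_div, abs_of_pos hm0, div_le_iff₀ hm0]
        have : |(k:ℝ) - m*p| < m * δ := hcon
        nlinarith [abs_nonneg ((k:ℝ) - m*p)]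
      have hle := hKey m hmM k hkm (by rw [← hpdef]; exact hkp)
      have hnum : (∫ η : ℝ, η * ((∏ j ∈ Finset.range m, probitDens (Y j ω) η) *
            (σ⁻¹ * stdPhi ((η - β * x) / σ))))
          = ∫ η : ℝ, η * (stdPhiCDF η ^ k * (1 - stdPhiCDF η) ^ (m - k) *
            (σ⁻¹ * stdPhi ((η - β * x) / σ))) := by
        refine integral_congr_ae (ae_of_all _ fun η => ?_)
        show η * ((∏ j ∈ Finset.range m, probitDens (Y j ω) η) *
            (σ⁻¹ * stdPhi ((η - β * x) / σ))) = _
        rw [prod_probit (fun j => Y j ω) (fun j => hval j ω) m η, hkdef]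
      have hden : (∫ η : ℝ, (∏ j ∈ Finset.range m, probitDens (Y j ω) η) *
            (σ⁻¹ * stdPhi ((η - β * x) / σ)))
          = ∫ η : ℝ, stdPhiCDF η ^ k * (1 - stdPhiCDF η) ^ (m - k) *
            (σ⁻¹ * stdPhi ((η - β * x) / σ)) := by
        refine integral_congr_ae (ae_of_all _ fun η => ?_)
        show (∏ j ∈ Finset.range m, probitDens (Y j ω) η) *
            (σ⁻¹ * stdPhi ((η - β * x) / σ)) = _
        rw [prod_probit (fun j => Y j ω) (fun j => hval j ω) m η, hkdef]
      rw [Set.mem_setOf_eq, hnum, hden] at hω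
      exact absurd hle (not_le.2 hω)
    calc P _ ≤ P {ω | (m:ℝ) * δ ≤ |X m ω - ∫ ω', X m ω' ∂P|} := measure_mono hsub
      _ ≤ ENNReal.ofReal (variance (X m) P / ((m:ℝ) * δ) ^ 2) :=
          meas_ge_le_variance_div_sq (hXmem m) (by positivity)
      _ ≤ ENNReal.ofReal (1 / ((m:ℝ) * δ ^ 2)) := by
          apply ENNReal.ofReal_le_ofReal
          have h1 := hXvar m
          rw [div_le_div_iff₀ (by positivity) (by positivity)]
          nlinarith [variance_nonneg (X m) P, hδ0]
  have h0 : Tendsto (fun m : ℕ => ENNReal.ofReal (1 / (m * δ ^ 2))) atTop (nhds 0) := by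
    have h1 : Tendsto (fun m : ℕ => (m:ℝ) * δ ^ 2) atTop atTop :=
      Tendsto.atTop_mul_const (by positivity) tendsto_natCast_atTop_atTop
    have h2 := h1.inv_tendsto_atTop
    have h3 : Tendsto (fun m : ℕ => ENNReal.ofReal (((m:ℝ) * δ ^ 2)⁻¹)) atTop
        (nhds (ENNReal.ofReal 0)) := ENNReal.tendsto_ofReal h2
    simpa [one_div] using h3
  refine tendsto_of_tendsto_of_tendsto_of_le_of_le' tendsto_const_nhds h0 ?_ ?_
  · exact Eventually.of_forall fun m => zero_le
  · exact eventually_atTop.2 ⟨max M 1, hbound⟩
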